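/- The assignment u ↦ U defined by [Uφ](ψ) = u(ψ₊φ₋) is a linear isomorphism from the full antidual S(V_ℂ)' onto the space Hom(SV, SV') of linear maps from the symmetric algebra SV to its full antidual. -/

import Mathlib

open scoped ComplexConjugate

noncomputable section

section Defs

variable {V W A : Type} [AddCommGroup V] [Module ℂ V] [CommRing A] [Algebra ℂ A]

/-- `A` (with embedding `ι`) is the symmetric algebra of `V`: universal property. -/
def IsSymmAlg (ι : V →ₗ[ℂ] A) : Prop :=
  ∀ (B : Type) [CommRing B] [Algebra ℂ B] (f : V →ₗ[ℂ] B),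
    ∃! F : A →ₐ[ℂ] B, ∀ v, F (ι v) = f v

/-- The span of `n`-fold products of generators: the degree-`n` part. -/
def GradeOf (gen : W → A) (n : ℕ) : Submodule ℂ A :=
  Submodule.span ℂ {a | ∃ f : Fin n → W, a = ∏ i, gen (f i)}

/-- The algebra is spanned by products of generators. -/
def SpanProdsOf (gen : W → A) : Prop :=
  ∀ x : A, x ∈ Submodule.span ℂ {a | ∃ (n : ℕ) (f : Fin n → W), a = ∏ i, gen (f i)}

/-- A quadratic: an antilinear functional concentrated in degree 2. -/
def IsQuadOf (gen : W → A) (ζ : A →ₗ⋆[ℂ] ℂ) : Prop :=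
  ∀ n : ℕ, n ≠ 2 → ∀ φ ∈ GradeOf gen n, ζ φ = 0

/-- The commutative product on the full antidual induced by the coproduct,
characterized on products of generators. -/
def IsConvProdOf (gen : W → A)
    (mul : (A →ₗ⋆[ℂ] ℂ) → (A →ₗ⋆[ℂ] ℂ) → (A →ₗ⋆[ℂ] ℂ)) : Prop :=
  ∀ (Φ Ψ : A →ₗ⋆[ℂ] ℂ) (n : ℕ) (v : Fin n → W),
    mul Φ Ψ (∏ i, gen (v i)) =
      ∑ S : Finset (Fin n), Φ (∏ i ∈ S, gen (v i)) * Ψ (∏ i ∈ Sᶜ, gen (v i))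

/-- The counit (unit of the antidual algebra): kills products of at least one generator. -/
def IsCounitOf (gen : W → A) (ε : A →ₗ⋆[ℂ] ℂ) : Prop :=
  ∀ (n : ℕ) (v : Fin n → W), ε (∏ i, gen (v i)) = if n = 0 then 1 else 0

/-- Powers of a functional with respect to the convolution product. -/
def powD (mul : (A →ₗ⋆[ℂ] ℂ) → (A →ₗ⋆[ℂ] ℂ) → (A →ₗ⋆[ℂ] ℂ))
    (ε ζ : A →ₗ⋆[ℂ] ℂ) : ℕ → (A →ₗ⋆[ℂ] ℂ)
  | 0 => ε
  | n + 1 => mul ζ (powD mul ε ζ n)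

/-- `E` is the Gaussian `exp ζ = Σ ζⁿ/n!` (a finite sum in each degree). -/
def IsGaussianOf (gen : W → A)
    (mul : (A →ₗ⋆[ℂ] ℂ) → (A →ₗ⋆[ℂ] ℂ) → (A →ₗ⋆[ℂ] ℂ))
    (ε ζ E : A →ₗ⋆[ℂ] ℂ) : Prop :=
  ∀ k : ℕ, ∀ ψ ∈ GradeOf gen k,
    E ψ = ∑ n ∈ Finset.range (k + 1), ((n.factorial : ℂ))⁻¹ * powD mul ε ζ n ψ

end Defs

section Defs2

variable {V A : Type} [NormedAddCommGroup V] [InnerProductSpace ℂ V]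
  [CommRing A] [Algebra ℂ A]

/-- The family of annihilation operators: derivations killing `1` with
`a v (ι w) = ⟨v|w⟩ 1`. -/
def IsAnn (ι : V →ₗ[ℂ] A) (a : V → A →ₗ[ℂ] A) : Prop :=
  ∀ v : V, (∀ x y : A, a v (x * y) = a v x * y + x * a v y) ∧
    a v 1 = 0 ∧ ∀ w : V, a v (ι w) = (inner ℂ v w : ℂ) • (1 : A)

/-- The canonical inner product on the symmetric algebra: graded pieces are
orthogonal and the permanent formula holds. (Antilinear in the first slot.) -/
def IsCanonInner (ι : V →ₗ[ℂ] A) (Bf : A →ₗ⋆[ℂ] A →ₗ[ℂ] ℂ) : Prop :=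
  (∀ (k n : ℕ), k ≠ n → ∀ (x : Fin k → V) (y : Fin n → V),
      Bf (∏ i, ι (x i)) (∏ i, ι (y i)) = 0) ∧
  ∀ (n : ℕ) (x y : Fin n → V),
      Bf (∏ i, ι (x i)) (∏ i, ι (y i)) =
        ∑ p : Equiv.Perm (Fin n), ∏ i, (inner ℂ (x i) (y (p i)) : ℂ)

/-- Iterated annihilation `a(vₙ)⋯a(v₁)φ` (applying `a(v₁)` first). -/
def iterAnn (a : V → A →ₗ[ℂ] A) : (n : ℕ) → (Fin n → V) → A → A
  | 0, _, φ => φ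
  | n + 1, v, φ => a (v (Fin.last n)) (iterAnn a n (fun i => v i.castSucc) φ)

/-- A symmetric bi-antilinear map `V × V → ℂ`. -/
def IsSymAnti (Z : V → V → ℂ) : Prop :=
  (∀ x y, Z x y = Z y x) ∧
  (∀ x y y', Z x (y + y') = Z x y + Z x y') ∧
  (∀ (c : ℂ) (x y : V), Z x (c • y) = conj c * Z x y)

end Defs2

section DefsC

variable {A AC : Type} [CommRing A] [Algebra ℂ A] [CommRing AC] [Algebra ℂ AC]

/-- An antilinear (conjugate-linear) algebra morphism, such as `φ ↦ φ₋`. -/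
def IsAntiAlgHom (m : A → AC) : Prop :=
  (∀ x y : A, m (x + y) = m x + m y) ∧ (∀ (c : ℂ) (x : A), m (c • x) = conj c • m x) ∧
  (∀ x y : A, m (x * y) = m x * m y) ∧ m 1 = 1

end DefsC

/-- Kernel theorem: `u ↦ U`, `[Uφ](ψ) = u(ψ₊φ₋)`, is a linear isomorphism from the
full antidual `S(V_ℂ)'` onto `Hom(SV, SV')`.  Here `A` is the symmetric algebra of
`V`, `AC` that of `V_ℂ`, `p : φ ↦ φ₊` and `m : φ ↦ φ₋` the plus/minus algebra
morphisms; that `SV_ℂ ≅ S(V₊) ⊗ S(V₋)` is expressed by the product basis. -/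
theorem kernel_theorem {V A AC I : Type}
    [NormedAddCommGroup V] [InnerProductSpace ℂ V] [CompleteSpace V]
    [CommRing A] [Algebra ℂ A] [CommRing AC] [Algebra ℂ AC]
    (ι : V →ₗ[ℂ] A) (hA : IsSymmAlg ι)
    (p : A →ₐ[ℂ] AC) (m : A → AC) (hm : IsAntiAlgHom m)
    (bA : Module.Basis I ℂ A) (bC : Module.Basis (I × I) ℂ AC)
    (hb : ∀ ij : I × I, bC ij = p (bA ij.1) * m (bA ij.2)) :
    ∃ e : (AC →ₗ⋆[ℂ] ℂ) ≃ₗ[ℂ] (A →ₗ[ℂ] (A →ₗ⋆[ℂ] ℂ)),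
      ∀ (u : AC →ₗ⋆[ℂ] ℂ) (φ ψ : A), e u φ ψ = u (p ψ * m φ) := by
  classical
  obtain ⟨hadd, hsmul, hmul, hone⟩ := hm
  -- the forward linear map
  let F : (AC →ₗ⋆[ℂ] ℂ) →ₗ[ℂ] (A →ₗ[ℂ] (A →ₗ⋆[ℂ] ℂ)) :=
    { toFun := fun u =>
        { toFun := fun φ =>
            { toFun := fun ψ => u (p ψ * m φ)
              map_add' := by
                intro x y
                show u (p (x + y) * m φ) = u (p x * m φ) + u (p y * m φ)
                rw [map_add, add_mul, map_add]
              map_smul' := by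
                intro c x
                show u (p (c • x) * m φ) = conj c • u (p x * m φ)
                rw [map_smul, smul_mul_assoc, map_smulₛₗ] }
          map_add' := by
            intro x y
            ext ψ
            simp only [LinearMap.coe_mk, AddHom.coe_mk, LinearMap.add_apply]
            rw [hadd, mul_add, map_add]
          map_smul' := by
            intro c x
            ext ψ
            simp only [LinearMap.coe_mk, AddHom.coe_mk, RingHom.id_apply,
              LinearMap.smul_apply]
            rw [hsmul, mul_smul_comm, map_smulₛₗ]
            simp }
      map_add' := by
        intro u v; ext φ ψ; simp
      map_smul' := by
        intro c u; ext φ ψ; simp }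
  have hF : ∀ (u : AC →ₗ⋆[ℂ] ℂ) (φ ψ : A), F u φ ψ = u (p ψ * m φ) := fun _ _ _ => rfl
  have hinj : Function.Injective F := by
    intro u v huv
    apply bC.ext
    intro ij
    have : F u (bA ij.2) (bA ij.1) = F v (bA ij.2) (bA ij.1) := by rw [huv]
    rwa [hF, hF, ← hb ij] at this
  have hsurj : Function.Surjective F := by
    intro T
    set g : AC →ₗ[ℂ] ℂ := bC.constr ℂ (fun ij => conj (T (bA ij.2) (bA ij.1))) with hg
    refine ⟨{ toFun := fun x => conj (g x)
              map_add' := by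
                intro x y
                show conj (g (x + y)) = conj (g x) + conj (g y)
                rw [map_add, map_add]
              map_smul' := by
                intro c x
                show conj (g (c • x)) = conj c • conj (g x)
                rw [map_smul, smul_eq_mul, map_mul]
                rfl }, ?_⟩
    apply bA.ext
    intro j
    apply bA.ext
    intro i
    rw [hF]
    simp only [LinearMap.coe_mk, AddHom.coe_mk]
    rw [← hb (i, j), hg, Module.Basis.constr_basis]
    exact Complex.conj_conj _
  exact ⟨LinearEquiv.ofBijective F ⟨hinj, hsurj⟩, fun u φ ψ => rfl⟩
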